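/- Let G be a topological group acting by automorphisms on a group H, and let T be the finest group topology on the semidirect product H ⋊ G under which the neighbourhood filter of the identity in D × σ converges to the identity (D discrete on H, σ the topology of G). Then the subspace topology T_H induced on H × {e} is a group topology on H under which the action of G on H is continuous. -/

import Mathlib

open TopologicalSpace

/-- With `T` the finest group topology on `H ⋊[φ] G` in which the neighbourhood filter of the
identity in `D × σ` (discrete on `H`) converges to the identity, the topology induced by `T`
on `H × {e}` is a group topology on `H` under which the action of `G` on `H` is continuous. -/
theorem induced_topology_on_H_group_topology_continuous_action {H G : Type*} [Group H] [Group G]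
    [σ : TopologicalSpace G] [IsTopologicalGroup G] (φ : G →* MulAut H)
    (T : TopologicalSpace (H ⋊[φ] G)) (hT : @IsTopologicalGroup (H ⋊[φ] G) T _)
    (hconv :
      @nhds (H ⋊[φ] G)
        (TopologicalSpace.induced (fun p : H ⋊[φ] G => (p.left, p.right))
          (@instTopologicalSpaceProd H G ⊥ σ)) 1 ≤ @nhds (H ⋊[φ] G) T 1)
    (hfinest : ∀ T' : TopologicalSpace (H ⋊[φ] G), @IsTopologicalGroup (H ⋊[φ] G) T' _ →
      @nhds (H ⋊[φ] G)
        (TopologicalSpace.induced (fun p : H ⋊[φ] G => (p.left, p.right))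
          (@instTopologicalSpaceProd H G ⊥ σ)) 1 ≤ @nhds (H ⋊[φ] G) T' 1 → T ≤ T') :
    @IsTopologicalGroup H
      (TopologicalSpace.induced (⇑(SemidirectProduct.inl : H →* H ⋊[φ] G)) T) _ ∧
    @Continuous (G × H) H
      (@instTopologicalSpaceProd G H σ
        (TopologicalSpace.induced (⇑(SemidirectProduct.inl : H →* H ⋊[φ] G)) T))
      (TopologicalSpace.induced (⇑(SemidirectProduct.inl : H →* H ⋊[φ] G)) T)
      (fun p => φ p.1 p.2) := by
  letI : TopologicalSpace (H ⋊[φ] G) := T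
  haveI : IsTopologicalGroup (H ⋊[φ] G) := hT
  letI tH : TopologicalSpace H :=
    TopologicalSpace.induced (⇑(SemidirectProduct.inl : H →* H ⋊[φ] G)) T
  haveI h1 : IsTopologicalGroup H :=
    Topology.IsInducing.topologicalGroup (SemidirectProduct.inl : H →* H ⋊[φ] G) ⟨rfl⟩
  refine ⟨h1, ?_⟩
  have hinr : Continuous (⇑(SemidirectProduct.inr : G →* H ⋊[φ] G)) := by
    apply continuous_of_continuousAt_one (SemidirectProduct.inr : G →* H ⋊[φ] G)
    rw [ContinuousAt, map_one]
    have h3 : Filter.Tendsto (⇑(SemidirectProduct.inr : G →* H ⋊[φ] G)) (nhds 1)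
        (@nhds (H ⋊[φ] G)
          (TopologicalSpace.induced (fun p : H ⋊[φ] G => (p.left, p.right))
            (@instTopologicalSpaceProd H G ⊥ σ)) 1) := by
      rw [@nhds_induced (H × G) (H ⋊[φ] G) (@instTopologicalSpaceProd H G ⊥ σ)
        (fun p : H ⋊[φ] G => (p.left, p.right)) 1, Filter.tendsto_comap_iff]
      have hprod : @nhds (H × G) (@instTopologicalSpaceProd H G ⊥ σ)
          ((1 : H ⋊[φ] G).left, (1 : H ⋊[φ] G).right) = (@nhds H ⊥ 1) ×ˢ (nhds 1) := by
        simp only [SemidirectProduct.one_left, SemidirectProduct.one_right]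
        exact @nhds_prod_eq H G ⊥ σ 1 1
      rw [hprod]
      have hcomp : ((fun p : H ⋊[φ] G => (p.left, p.right)) ∘
          ⇑(SemidirectProduct.inr : G →* H ⋊[φ] G)) = fun g : G => ((1 : H), g) := by
        funext g; simp
      rw [hcomp]
      have hconst : Filter.Tendsto (fun _ : G => (1 : H)) (nhds 1) (@nhds H ⊥ 1) := by
        intro s hs
        have h1s : (1 : H) ∈ s := by
          letI : TopologicalSpace H := ⊥
          exact mem_of_mem_nhds hs
        simpa [Filter.mem_map, Set.preimage_const_of_mem h1s] using Filter.univ_mem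
      exact Filter.Tendsto.prodMk hconst Filter.tendsto_id
    exact h3.mono_right hconv
  have hmul : Continuous (fun p : G × H =>
      SemidirectProduct.inr p.1 * SemidirectProduct.inl p.2 * SemidirectProduct.inr p.1⁻¹ :
      G × H → H ⋊[φ] G) := by
    have hl : Continuous (⇑(SemidirectProduct.inl : H →* H ⋊[φ] G)) := continuous_induced_dom
    fun_prop
  apply continuous_induced_rng.2
  have : (⇑(SemidirectProduct.inl : H →* H ⋊[φ] G)) ∘ (fun p : G × H => φ p.1 p.2) =
      fun p : G × H =>
      SemidirectProduct.inr p.1 * SemidirectProduct.inl p.2 * SemidirectProduct.inr p.1⁻¹ := by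
    funext p
    simp only [Function.comp_apply]
    exact SemidirectProduct.inl_aut p.1 p.2
  rw [this]
  exact hmul
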